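/- Let a ∈ (-1,1) and let Φ : [0,∞) → ℝ be a C² solution of Φ''(t) + (a/t)Φ'(t) - Φ(t) = 0 on (0,∞), continuous at 0, with Φ(0) = 1 and Φ(t) → 0 as t → +∞. Then Φ(t) > 0 for all t ≥ 0 and Φ is strictly decreasing on (0,∞). -/

import Mathlib

open Set Filter

private lemma helper_lt_pos {f f' : ℝ → ℝ} {p q : ℝ} (hpq : p < q)
    (hf : ∀ t ∈ Set.Icc p q, HasDerivAt f (f' t) t)
    (hpos : ∀ t ∈ Set.Ioo p q, 0 < f' t) : f p < f q := by
  have hmono : StrictMonoOn f (Set.Icc p q) :=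
    strictMonoOn_of_deriv_pos (convex_Icc p q)
      (fun t ht => (hf t ht).continuousAt.continuousWithinAt)
      (by
        rw [interior_Icc]; intro t ht
        rw [(hf t (Ioo_subset_Icc_self ht)).deriv]; exact hpos t ht)
  exact hmono (left_mem_Icc.2 hpq.le) (right_mem_Icc.2 hpq.le) hpq

private lemma helper_lt_neg {f f' : ℝ → ℝ} {p q : ℝ} (hpq : p < q)
    (hf : ∀ t ∈ Set.Icc p q, HasDerivAt f (f' t) t)
    (hneg : ∀ t ∈ Set.Ioo p q, f' t < 0) : f q < f p := by
  have := helper_lt_pos (f := fun t => -f t) (f' := fun t => -f' t) hpq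
    (fun t ht => (hf t ht).neg) (fun t ht => neg_pos.2 (hneg t ht))
  simpa using this

private lemma helper_deriv_nonneg {f : ℝ → ℝ} {f' b c : ℝ} (hbc : c < b)
    (hf : HasDerivAt f f' b) (hb : f b = 0)
    (hneg : ∀ s, c < s → s < b → f s < 0) : 0 ≤ f' := by
  have h := (hf.hasDerivWithinAt (s := Set.Iio b))
  rw [hasDerivWithinAt_iff_tendsto_slope, Set.diff_singleton_eq_self (by simp)] at h
  refine ge_of_tendsto h ?_
  filter_upwards [Ioo_mem_nhdsLT_of_mem (show b ∈ Set.Ioc c b from ⟨hbc, le_refl b⟩)] with s hs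
  rw [slope_def_field, hb, sub_zero]
  have h1 : f s < 0 := hneg s hs.1 hs.2
  have h2 : s - b < 0 := by linarith [hs.2]
  exact (div_pos_of_neg_of_neg h1 h2).le

private lemma deriv_g {a : ℝ} {Φ Φ' Φ'' : ℝ → ℝ}
    (hd2 : ∀ t > (0:ℝ), HasDerivAt Φ' (Φ'' t) t)
    (hode : ∀ t > (0:ℝ), Φ'' t + (a / t) * Φ' t - Φ t = 0) :
    ∀ t > (0:ℝ), HasDerivAt (fun s => s ^ a * Φ' s) (t ^ a * Φ t) t := by
  intro t ht
  have h1 : HasDerivAt (fun s : ℝ => s ^ a) (a * t ^ (a - 1)) t :=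
    Real.hasDerivAt_rpow_const (Or.inl ht.ne')
  have h2 := h1.mul (hd2 t ht)
  refine h2.congr_deriv ?_
  symm
  have hode' := hode t ht
  rw [Real.rpow_sub_one ht.ne' a]
  field_simp
  field_simp at hode'
  linear_combination (-1) * hode'

private lemma neg_case {a t₀ : ℝ} (ht₀ : 0 < t₀)
    {Φ Φ' Φ'' : ℝ → ℝ}
    (hcont : ContinuousOn Φ (Set.Ici 0))
    (hd1 : ∀ t > (0:ℝ), HasDerivAt Φ (Φ' t) t)
    (hd2 : ∀ t > (0:ℝ), HasDerivAt Φ' (Φ'' t) t)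
    (hode : ∀ t > (0:ℝ), Φ'' t + (a / t) * Φ' t - Φ t = 0)
    (hlim : Filter.Tendsto Φ Filter.atTop (nhds 0))
    (hΦt₀ : Φ t₀ = 0) (hlt : Φ' t₀ < 0) : False := by
  have hg := deriv_g hd2 hode
  set g : ℝ → ℝ := fun s => s ^ a * Φ' s with hgdef
  have hg0 : g t₀ < 0 := mul_neg_of_pos_of_neg (Real.rpow_pos_of_pos ht₀ a) hlt
  -- eventual negativity to the right of t₀
  have hev : ∀ᶠ s in nhdsWithin t₀ (Set.Ioi t₀), Φ s < 0 := by
    have h := (hd1 t₀ ht₀).hasDerivWithinAt (s := Set.Ioi t₀)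
    rw [hasDerivWithinAt_iff_tendsto_slope, Set.diff_singleton_eq_self (by simp)] at h
    have h2 : ∀ᶠ s in nhdsWithin t₀ (Set.Ioi t₀), slope Φ t₀ s < 0 :=
      h.eventually_lt_const hlt
    filter_upwards [h2, self_mem_nhdsWithin] with s hs1 hs2
    rw [slope_def_field, hΦt₀, sub_zero] at hs1
    have h3 : 0 < s - t₀ := sub_pos.2 hs2
    by_contra hc
    push_neg at hc
    exact absurd hs1 (not_lt.2 (div_nonneg hc h3.le))
  obtain ⟨δu, hδu, hsub⟩ := mem_nhdsGT_iff_exists_Ioo_subset.1 hev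
  rw [Set.mem_Ioi] at hδu
  have hneg : ∀ t, t₀ < t → Φ t < 0 := by
    by_contra hc
    push_neg at hc
    obtain ⟨t₂', ht₂'1, ht₂'2⟩ := hc
    set m : ℝ := (t₀ + δu) / 2 with hm
    have hmδ : m < δu := by rw [hm]; linarith
    have hmt₀ : t₀ < m := by rw [hm]; linarith
    have hmpos : 0 < m := ht₀.trans hmt₀
    have ht₂'m : m ≤ t₂' := by
      by_contra hc2
      push_neg at hc2
      exact absurd (hsub ⟨ht₂'1, hc2.trans hmδ⟩) (not_lt.2 ht₂'2)
    have hS2closed : IsClosed (Set.Ici m ∩ Φ ⁻¹' Set.Ici 0) :=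
      (hcont.mono (fun x hx => Set.mem_Ici.2 (le_trans hmpos.le hx))).preimage_isClosed_of_isClosed
        isClosed_Ici isClosed_Ici
    have hS2ne : (Set.Ici m ∩ Φ ⁻¹' Set.Ici 0).Nonempty := ⟨t₂', ht₂'m, ht₂'2⟩
    have hS2bdd : BddBelow (Set.Ici m ∩ Φ ⁻¹' Set.Ici 0) := ⟨m, fun x hx => hx.1⟩
    set t₂ := sInf (Set.Ici m ∩ Φ ⁻¹' Set.Ici 0) with ht₂def
    have ht₂S : t₂ ∈ Set.Ici m ∩ Φ ⁻¹' Set.Ici 0 := hS2closed.csInf_mem hS2ne hS2bdd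
    have ht₂m : m ≤ t₂ := ht₂S.1
    have ht₂gt : t₀ < t₂ := lt_of_lt_of_le hmt₀ ht₂m
    have hneg2 : ∀ s, t₀ < s → s < t₂ → Φ s < 0 := by
      intro s hs1 hs2
      by_cases h3 : s < m
      · exact hsub ⟨hs1, h3.trans hmδ⟩
      · push_neg at h3
        by_contra h4
        push_neg at h4
        exact absurd (csInf_le hS2bdd ⟨h3, h4⟩) (not_le.2 hs2)
    have hΦt₂ : Φ t₂ = 0 := by
      refine le_antisymm ?_ ht₂S.2
      haveI hne : (nhdsWithin t₂ (Set.Ioo t₀ t₂)).NeBot := by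
        rw [← mem_closure_iff_nhdsWithin_neBot, closure_Ioo ht₂gt.ne]
        exact ⟨ht₂gt.le, le_refl _⟩
      have hcw : Filter.Tendsto Φ (nhdsWithin t₂ (Set.Ioo t₀ t₂)) (nhds (Φ t₂)) :=
        (hcont.continuousWithinAt (Set.mem_Ici.2 (ht₀.trans ht₂gt).le)).mono
          (fun x hx => (ht₀.trans hx.1).le)
      exact le_of_tendsto hcw (eventually_of_mem self_mem_nhdsWithin
        (fun s hs => (hneg2 s hs.1 hs.2).le))
    have hΦ't₂ : 0 ≤ Φ' t₂ :=
      helper_deriv_nonneg ht₂gt (hd1 t₂ (ht₀.trans ht₂gt)) hΦt₂ hneg2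
    have hgq : g t₂ < g t₀ :=
      helper_lt_neg ht₂gt
        (fun t htm => hg t (lt_of_lt_of_le ht₀ htm.1))
        (fun t htm => mul_neg_of_pos_of_neg
          (Real.rpow_pos_of_pos (ht₀.trans htm.1) a) (hneg2 t htm.1 htm.2))
    have hg2 : 0 ≤ g t₂ := mul_nonneg (Real.rpow_pos_of_pos (ht₀.trans ht₂gt) a).le hΦ't₂
    linarith
  have hΦ'neg : ∀ t, t₀ < t → Φ' t < 0 := by
    intro t ht
    have h2 : g t < g t₀ :=
      helper_lt_neg ht
        (fun s hsm => hg s (lt_of_lt_of_le ht₀ hsm.1))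
        (fun s hsm => mul_neg_of_pos_of_neg
          (Real.rpow_pos_of_pos (ht₀.trans hsm.1) a) (hneg s hsm.1))
    have h3 : g t < 0 := h2.trans hg0
    by_contra h4
    push_neg at h4
    exact absurd (mul_nonneg (Real.rpow_pos_of_pos (ht₀.trans ht) a).le h4) (not_le.2 h3)
  have hfin : ∀ t, t₀ + 1 ≤ t → Φ t ≤ Φ (t₀ + 1) := by
    intro t ht
    rcases eq_or_lt_of_le ht with h | h
    · rw [← h]
    · exact (helper_lt_neg h
        (fun s hsm => hd1 s (by linarith [hsm.1]))
        (fun s hsm => hΦ'neg s (by linarith [hsm.1]))).le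
  have h1 : (0:ℝ) ≤ Φ (t₀ + 1) := le_of_tendsto hlim (eventually_atTop.2 ⟨t₀ + 1, hfin⟩)
  exact absurd h1 (not_le.2 (hneg (t₀ + 1) (by linarith)))

private lemma helper_le_nonneg {f f' : ℝ → ℝ} {p q : ℝ} (hpq : p ≤ q)
    (hf : ∀ t ∈ Set.Icc p q, HasDerivAt f (f' t) t)
    (hpos : ∀ t ∈ Set.Ioo p q, 0 ≤ f' t) : f p ≤ f q := by
  have hmono : MonotoneOn f (Set.Icc p q) :=
    monotoneOn_of_deriv_nonneg (convex_Icc p q)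
      (fun t ht => (hf t ht).continuousAt.continuousWithinAt)
      (by
        rw [interior_Icc]
        exact fun t ht => ((hf t (Ioo_subset_Icc_self ht)).differentiableAt).differentiableWithinAt)
      (by
        rw [interior_Icc]; intro t ht
        rw [(hf t (Ioo_subset_Icc_self ht)).deriv]; exact hpos t ht)
  exact hmono (left_mem_Icc.2 hpq) (right_mem_Icc.2 hpq) hpq

private lemma energy_case {a t₀ : ℝ} (ha2 : a < 1) (ht₀ : 0 < t₀)
    {Φ Φ' Φ'' : ℝ → ℝ}
    (hd1 : ∀ t > (0:ℝ), HasDerivAt Φ (Φ' t) t)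
    (hd2 : ∀ t > (0:ℝ), HasDerivAt Φ' (Φ'' t) t)
    (hode : ∀ t > (0:ℝ), Φ'' t + (a / t) * Φ' t - Φ t = 0)
    (hΦt₀ : Φ t₀ = 0) (hΦ't₀ : Φ' t₀ = 0)
    (hpos : ∀ s, 0 < s → s < t₀ → 0 < Φ s) : False := by
  have hle := helper_le_nonneg
      (f := fun t => Real.exp ((2 + 4 * t₀⁻¹) * t) * (Φ t ^ 2 + Φ' t ^ 2))
      (f' := fun t => Real.exp ((2 + 4 * t₀⁻¹) * t) *
        ((2 + 4 * t₀⁻¹) * (Φ t ^ 2 + Φ' t ^ 2) + (2 * Φ t * Φ' t + 2 * Φ' t * Φ'' t)))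
      (p := t₀/2) (q := t₀) (by linarith) ?_ ?_
  · have hp : 0 < Φ (t₀/2) := hpos _ (by linarith) (by linarith)
    simp only [hΦt₀, hΦ't₀] at hle
    norm_num at hle
    nlinarith [mul_pos (Real.exp_pos ((2 + 4 * t₀⁻¹) * (t₀/2))) (pow_pos hp 2),
      mul_nonneg (Real.exp_pos ((2 + 4 * t₀⁻¹) * (t₀/2))).le (sq_nonneg (Φ' (t₀/2)))]
  · intro t htm
    have ht : 0 < t := lt_of_lt_of_le (by linarith) htm.1
    have h1 : HasDerivAt (fun t => Φ t ^ 2 + Φ' t ^ 2)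
        (2 * Φ t * Φ' t + 2 * Φ' t * Φ'' t) t := by
      have h := ((hd1 t ht).pow 2).add ((hd2 t ht).pow 2)
      refine h.congr_deriv ?_
      push_cast; ring
    have h2 : HasDerivAt (fun t : ℝ => Real.exp ((2 + 4 * t₀⁻¹) * t))
        ((2 + 4 * t₀⁻¹) * Real.exp ((2 + 4 * t₀⁻¹) * t)) t := by
      have h3 := ((hasDerivAt_id t).const_mul (2 + 4 * t₀⁻¹)).exp
      simpa [mul_comm] using h3
    have h4 := h2.mul h1
    refine h4.congr_deriv ?_
    ring
  · intro t htm
    have ht : 0 < t := lt_of_lt_of_le (by linarith) htm.1.le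
    have hode' := hode t ht
    have hΦ'' : Φ'' t = Φ t - (a/t) * Φ' t := by linarith
    refine mul_nonneg (Real.exp_pos _).le ?_
    rw [hΦ'']
    have hbound : a / t ≤ 2 * t₀⁻¹ := by
      have h5 : (2:ℝ) * t₀⁻¹ = 2 / t₀ := by ring
      rw [h5, div_le_div_iff₀ ht ht₀]
      nlinarith [htm.1]
    have k1 : (0:ℝ) ≤ 2*(Φ t + Φ' t)^2 := by positivity
    have k2 : (0:ℝ) ≤ 4*t₀⁻¹*Φ t^2 := by positivity
    have k3 : (0:ℝ) ≤ 2*(2*t₀⁻¹*Φ' t^2 - a/t*Φ' t^2) := by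
      have := mul_le_mul_of_nonneg_right hbound (sq_nonneg (Φ' t))
      linarith
    linarith [k1, k2, k3]


/-- If `Φ` solves `Φ'' + (a/t)Φ' - Φ = 0` on `(0,∞)`, is continuous at `0` with
`Φ(0) = 1`, and `Φ(t) → 0` as `t → ∞`, then `Φ > 0` on `[0,∞)` and `Φ` is
strictly decreasing on `(0,∞)`. -/
theorem stmt5 (a : ℝ) (ha : a ∈ Set.Ioo (-1 : ℝ) 1)
    (Φ Φ' Φ'' : ℝ → ℝ)
    (hcont : ContinuousOn Φ (Set.Ici 0))
    (hd1 : ∀ t > (0:ℝ), HasDerivAt Φ (Φ' t) t)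
    (hd2 : ∀ t > (0:ℝ), HasDerivAt Φ' (Φ'' t) t)
    (hd2cont : ContinuousOn Φ'' (Set.Ioi 0))
    (hode : ∀ t > (0:ℝ), Φ'' t + (a / t) * Φ' t - Φ t = 0)
    (h0 : Φ 0 = 1)
    (hlim : Filter.Tendsto Φ Filter.atTop (nhds 0)) :
    (∀ t ≥ (0:ℝ), 0 < Φ t) ∧ StrictAntiOn Φ (Set.Ioi 0) := by
  obtain ⟨ha1, ha2⟩ := ha
  have hg := deriv_g hd2 hode
  -- Step 1: positivity on (0, ∞)
  have key : ∀ t > (0:ℝ), 0 < Φ t := by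
    by_contra hcon
    push_neg at hcon
    obtain ⟨t₁, ht₁, hΦ₁⟩ := hcon
    have hSclosed : IsClosed (Set.Ici 0 ∩ Φ ⁻¹' Set.Iic 0) :=
      hcont.preimage_isClosed_of_isClosed isClosed_Ici isClosed_Iic
    have hSne : (Set.Ici 0 ∩ Φ ⁻¹' Set.Iic 0).Nonempty := ⟨t₁, le_of_lt ht₁, hΦ₁⟩
    have hSbdd : BddBelow (Set.Ici 0 ∩ Φ ⁻¹' Set.Iic 0) := ⟨0, fun x hx => hx.1⟩
    set t₀ := sInf (Set.Ici 0 ∩ Φ ⁻¹' Set.Iic 0) with ht₀def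
    have ht₀S : t₀ ∈ Set.Ici 0 ∩ Φ ⁻¹' Set.Iic 0 := hSclosed.csInf_mem hSne hSbdd
    have ht₀nonneg : (0:ℝ) ≤ t₀ := ht₀S.1
    have ht₀le : Φ t₀ ≤ 0 := ht₀S.2
    have ht₀pos : 0 < t₀ := by
      rcases eq_or_lt_of_le ht₀nonneg with h | h
      · rw [← h, h0] at ht₀le; linarith
      · exact h
    have hposlt : ∀ s, 0 ≤ s → s < t₀ → 0 < Φ s := by
      intro s hs hst
      by_contra hneg
      push_neg at hneg
      exact absurd (csInf_le hSbdd ⟨hs, hneg⟩) (not_le.2 hst)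
    have hΦt₀ : Φ t₀ = 0 := by
      refine le_antisymm ht₀le ?_
      haveI hne : (nhdsWithin t₀ (Set.Ioo 0 t₀)).NeBot := by
        rw [← mem_closure_iff_nhdsWithin_neBot, closure_Ioo ht₀pos.ne]
        exact ⟨ht₀pos.le, le_refl _⟩
      have hcw : Filter.Tendsto Φ (nhdsWithin t₀ (Set.Ioo 0 t₀)) (nhds (Φ t₀)) :=
        (hcont.continuousWithinAt (Set.mem_Ici.2 ht₀nonneg)).mono
          (fun x hx => hx.1.le)
      exact ge_of_tendsto hcw (Filter.eventually_of_mem self_mem_nhdsWithin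
        (fun s hs => (hposlt s hs.1.le hs.2).le))
    have hΦ't₀ : Φ' t₀ ≤ 0 := by
      have h := helper_deriv_nonneg (f := fun t => -Φ t) (f' := -Φ' t₀) (c := 0) ht₀pos
        ((hd1 t₀ ht₀pos).neg) (by simp [hΦt₀])
        (fun s hs1 hs2 => neg_neg_iff_pos.2 (hposlt s hs1.le hs2))
      linarith
    rcases lt_or_eq_of_le hΦ't₀ with hlt | heq
    · exact neg_case ht₀pos hcont hd1 hd2 hode hlim hΦt₀ hlt
    · exact energy_case ha2 ht₀pos hd1 hd2 hode hΦt₀ heq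
        (fun s hs1 hs2 => hposlt s hs1.le hs2)
  have hpos : ∀ t ≥ (0:ℝ), 0 < Φ t := by
    intro t ht
    rcases eq_or_lt_of_le ht with h | h
    · rw [← h, h0]; norm_num
    · exact key t h
  -- Step 2: Φ' < 0 on (0, ∞)
  have hΦ'neg : ∀ t > (0:ℝ), Φ' t < 0 := by
    by_contra hc
    push_neg at hc
    obtain ⟨t₁, ht₁, hge⟩ := hc
    have hΦ'pos : ∀ t, t₁ < t → 0 < Φ' t := by
      intro t ht
      have h2 : (fun s => s ^ a * Φ' s) t₁ < (fun s => s ^ a * Φ' s) t :=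
        helper_lt_pos ht (fun s hsm => hg s (lt_of_lt_of_le ht₁ hsm.1))
          (fun s hsm => mul_pos (Real.rpow_pos_of_pos (ht₁.trans hsm.1) a)
            (key s (ht₁.trans hsm.1)))
      have h3 : (0:ℝ) ≤ t₁ ^ a * Φ' t₁ :=
        mul_nonneg (Real.rpow_pos_of_pos ht₁ a).le hge
      simp only at h2
      have h4 : 0 < t ^ a * Φ' t := lt_of_le_of_lt h3 h2
      by_contra h5
      push_neg at h5
      exact absurd (mul_nonpos_of_nonneg_of_nonpos
        (Real.rpow_pos_of_pos (ht₁.trans ht) a).le h5) (not_le.2 h4)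
    have hfin : ∀ t, t₁ + 1 ≤ t → Φ (t₁ + 1) ≤ Φ t := by
      intro t ht
      rcases eq_or_lt_of_le ht with h | h
      · rw [h]
      · exact (helper_lt_pos h (fun s hsm => hd1 s (by linarith [hsm.1]))
          (fun s hsm => hΦ'pos s (by linarith [hsm.1]))).le
    have h1 : Φ (t₁ + 1) ≤ 0 := ge_of_tendsto hlim (Filter.eventually_atTop.2 ⟨t₁ + 1, hfin⟩)
    exact absurd h1 (not_le.2 (key (t₁ + 1) (by linarith)))
  refine ⟨hpos, ?_⟩
  exact strictAntiOn_of_deriv_neg (convex_Ioi 0)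
    (hcont.mono (fun x hx => Set.mem_Ici.2 (le_of_lt hx)))
    (by
      rw [interior_Ioi]
      intro x hx
      rw [(hd1 x hx).deriv]
      exact hΦ'neg x hx)
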